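/- Let γ and δ be disjoint 3-cycles in Sym(n) acting on an abelian group V of exponent 2, and set ε = γδ. If tr_γ = tr_δ = tr_ε = 0 in End(V) (where tr_σ = 1 + σ + σ²), then γ + δ = 0 in End(V), i.e., γ and δ act identically on V; in particular, if the action of ⟨γ, δ⟩ is faithful and V ≠ 0, not all three of tr_γ, tr_δ, tr_ε can vanish. -/
import Mathlib

private lemma aux16 {V : Type*} [AddCommGroup V] (hexp : ∀ v : V, v + v = 0)
    {a b c : V} (h : a + b + c = 0) : b = a + c := by
  have hneg : ∀ x : V, -x = x := fun x => neg_eq_of_add_eq_zero_left (hexp x)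
  have h' : b + (a + c) = 0 := by rw [← h]; abel
  have := eq_neg_of_add_eq_zero_left h'
  rw [hneg] at this; exact this

/-- For disjoint 3-cycles γ, δ acting on a group of exponent 2 with
tr_γ = tr_δ = tr_{γδ} = 0, one gets γ + δ = 0 in End(V); in particular a
faithful action of ⟨γ,δ⟩ on nonzero V is impossible. -/
theorem stmt_16 {V : Type*} [AddCommGroup V] (hexp : ∀ v : V, v + v = 0)
    (n : ℕ) [DistribMulAction (Equiv.Perm (Fin n)) V]
    (γ δ : Equiv.Perm (Fin n))
    (hγ : Equiv.Perm.IsThreeCycle γ) (hδ : Equiv.Perm.IsThreeCycle δ)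
    (hdisj : Equiv.Perm.Disjoint γ δ)
    (h1 : ∀ v : V, v + γ • v + (γ ^ 2) • v = 0)
    (h2 : ∀ v : V, v + δ • v + (δ ^ 2) • v = 0)
    (h3 : ∀ v : V, v + (γ * δ) • v + ((γ * δ) ^ 2) • v = 0) :
    (∀ v : V, γ • v + δ • v = 0) ∧
    (Nontrivial V →
      (∀ g ∈ Subgroup.closure ({γ, δ} : Set (Equiv.Perm (Fin n))),
        (∀ v : V, g • v = v) → g = 1) → False) := by
  have hcomm : Commute γ δ := hdisj.commute
  have hmulpow : (γ * δ) ^ 2 = γ ^ 2 * δ ^ 2 := hcomm.mul_pow 2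
  have key : ∀ v : V, γ • v = δ • v := by
    intro v
    -- step1: (γδ)•v = v + γ²δ²•v
    have s1 : γ • (δ • v) = v + (γ ^ 2) • ((δ ^ 2) • v) := by
      have := aux16 hexp (h3 v)
      rwa [mul_smul, hmulpow, mul_smul] at this
    -- step2: γ•(δ•v) = δ•v + γ²•(δ•v)
    have s2 : γ • (δ • v) = δ • v + (γ ^ 2) • (δ • v) := aux16 hexp (h1 (δ • v))
    -- step3: v = δ•v + δ²•v
    have s3 : (δ : Equiv.Perm (Fin n)) • v + (δ ^ 2) • v = v := by
      have := aux16 hexp (h2 v)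
      have h' : v + ((δ : Equiv.Perm (Fin n)) • v + (δ ^ 2) • v) = 0 := by
        rw [← h2 v]; abel
      have := eq_neg_of_add_eq_zero_right h'
      have hneg : ∀ x : V, -x = x := fun x => neg_eq_of_add_eq_zero_left (hexp x)
      rw [hneg] at this; exact this
    -- combine: v + γ²δ²v = δv + γ²δv  ⇒  γ²•v = v + δ•v
    have s4 : (γ ^ 2) • v = v + δ • v := by
      have e : v + (γ ^ 2) • ((δ ^ 2) • v) = δ • v + (γ ^ 2) • (δ • v) := by
        rw [← s1, s2]
      have e2 : (γ ^ 2) • (δ • v) + (γ ^ 2) • ((δ ^ 2) • v) = (γ ^ 2) • v := by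
        rw [← smul_add, s3]
      -- add δ•v + γ²δ²v to both sides of e
      have : v + δ • v = (γ ^ 2) • (δ • v) + (γ ^ 2) • ((δ ^ 2) • v) := by
        have e3 : (v + (γ ^ 2) • ((δ ^ 2) • v)) + (δ • v + (γ ^ 2) • ((δ ^ 2) • v))
            = (δ • v + (γ ^ 2) • (δ • v)) + (δ • v + (γ ^ 2) • ((δ ^ 2) • v)) := by
          rw [e]
        calc v + δ • v
            = (v + (γ ^ 2) • ((δ ^ 2) • v)) + (δ • v + (γ ^ 2) • ((δ ^ 2) • v))
              - ((γ ^ 2) • ((δ ^ 2) • v) + (γ ^ 2) • ((δ ^ 2) • v)) := by abel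
          _ = (δ • v + (γ ^ 2) • (δ • v)) + (δ • v + (γ ^ 2) • ((δ ^ 2) • v))
              - 0 := by rw [e3, hexp]
          _ = (γ ^ 2) • (δ • v) + (γ ^ 2) • ((δ ^ 2) • v)
              + (δ • v + δ • v) := by abel
          _ = (γ ^ 2) • (δ • v) + (γ ^ 2) • ((δ ^ 2) • v) := by rw [hexp]; abel
      rw [this, e2]
    -- finish: γ•v = v + γ²•v = v + v + δ•v = δ•v
    have s5 : γ • v = v + (γ ^ 2) • v := aux16 hexp (h1 v)
    rw [s5, s4, ← add_assoc, hexp, zero_add]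
  refine ⟨fun v => by rw [key v, hexp], fun _ hfaith => ?_⟩
  have hmem : γ * δ⁻¹ ∈ Subgroup.closure ({γ, δ} : Set (Equiv.Perm (Fin n))) := by
    have hγm : γ ∈ Subgroup.closure ({γ, δ} : Set (Equiv.Perm (Fin n))) :=
      Subgroup.subset_closure (by simp)
    have hδm : δ ∈ Subgroup.closure ({γ, δ} : Set (Equiv.Perm (Fin n))) :=
      Subgroup.subset_closure (by simp)
    exact mul_mem hγm (inv_mem hδm)
  have htriv : ∀ v : V, (γ * δ⁻¹) • v = v := by
    intro v
    rw [mul_smul, key (δ⁻¹ • v), ← mul_smul, mul_inv_cancel, one_smul]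
  have : γ * δ⁻¹ = 1 := hfaith _ hmem htriv
  have hγδ : γ = δ := by
    rwa [mul_inv_eq_one] at this
  have hone : γ = 1 := by
    apply Equiv.ext; intro x
    rcases hdisj x with h | h
    · simpa using h
    · rw [hγδ]; simpa using h
  rw [hone] at hγ
  simp [Equiv.Perm.IsThreeCycle, Equiv.Perm.cycleType_one] at hγ
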